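/- Let M ⊆ {0,1}^U be a Δ-matroid and let w₁, w₂ ∈ U be distinct variables such that some β ∈ M satisfies β(w₁) = β(w₂). Then the identification M_{w₁=w₂} ⊆ {0,1}^{U ∖ {w₁,w₂}} is a Δ-matroid; moreover, if M is an even Δ-matroid, then so is M_{w₁=w₂}. -/
import Mathlib


/-- Flip the values of a Boolean tuple on a finite set of coordinates. -/
def flipS {V : Type*} [DecidableEq V] (α : V → Bool) (S : Finset V) : V → Bool :=
  fun v => if v ∈ S then !(α v) else α v

/-- Flip the value of a Boolean tuple at a single coordinate. -/
def flip1 {V : Type*} [DecidableEq V] (α : V → Bool) (u : V) : V → Bool :=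
  flipS α {u}

/-- `M` is a Δ-matroid. -/
def IsDeltaMatroid {V : Type*} [DecidableEq V] (M : Set (V → Bool)) : Prop :=
  M.Nonempty ∧ ∀ α ∈ M, ∀ β ∈ M, ∀ v, α v ≠ β v →
    ∃ u, α u ≠ β u ∧ flipS α {u, v} ∈ M

/-- Number of ones in a Boolean tuple. -/
def numOnes {V : Type*} [Fintype V] (α : V → Bool) : ℕ :=
  (Finset.univ.filter fun v => α v = true).card

/-- `M` is an even Δ-matroid. -/
def IsEvenDeltaMatroid {V : Type*} [Fintype V] [DecidableEq V] (M : Set (V → Bool)) : Prop :=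
  IsDeltaMatroid M ∧ ∀ α ∈ M, ∀ β ∈ M, numOnes α % 2 = numOnes β % 2

/-- `α` and `β` are even-neighbors with respect to `M`. -/
def EvenNeighbors {V : Type*} [DecidableEq V] (M : Set (V → Bool)) (α β : V → Bool) : Prop :=
  ∃ u v, u ≠ v ∧ β = flip1 (flip1 α u) v ∧ flip1 α u ∉ M

/-- Reachability via chains of even-neighbors inside `M`. -/
def Reachable {V : Type*} [DecidableEq V] (M : Set (V → Bool)) :
    (V → Bool) → (V → Bool) → Prop :=
  Relation.ReflTransGen (fun x y => x ∈ M ∧ y ∈ M ∧ EvenNeighbors M x y)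

/-- `M` is coverable. -/
def Coverable {V : Type*} [Fintype V] [DecidableEq V] (M : Set (V → Bool)) : Prop :=
  ∀ α ∈ M, ∃ Mα : Set (V → Bool),
    IsEvenDeltaMatroid Mα ∧
    (∀ β ∈ M, Reachable M α β → β ∈ Mα) ∧
    (∀ γ ∈ M, Reachable M α γ → ∀ u v,
      flip1 (flip1 γ u) v ∈ Mα → flip1 (flip1 γ u) v ∉ M →
      flip1 γ u ∈ M ∧ flip1 γ v ∈ M)

/-- Direct product of two sets of tuples on disjoint ground sets. -/
def prodSet {U V : Type*} (M : Set (U → Bool)) (N : Set (V → Bool)) :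
    Set (U ⊕ V → Bool) :=
  {h | (fun u => h (Sum.inl u)) ∈ M ∧ (fun v => h (Sum.inr v)) ∈ N}

/-- `M` is an even-zebra Δ-matroid. -/
def IsEvenZebra {V : Type*} [Fintype V] [DecidableEq V] (M : Set (V → Bool)) : Prop :=
  ∀ α ∈ M, ∃ Mα : Set (V → Bool),
    IsEvenDeltaMatroid Mα ∧
    (∀ β ∈ M, numOnes β % 2 = numOnes α % 2 → β ∈ Mα) ∧
    (∀ β ∈ M, ∀ u v, flip1 (flip1 β u) v ∈ Mα → flip1 (flip1 β u) v ∉ M →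
      flip1 β u ∈ M ∧ flip1 β v ∈ M)

/-- Identification of two variables of `M`. -/
def identify {U : Type*} [DecidableEq U] (M : Set (U → Bool)) (w₁ w₂ : U) :
    Set ({x : U // x ≠ w₁ ∧ x ≠ w₂} → Bool) :=
  {g | ∃ β ∈ M, β w₁ = β w₂ ∧ ∀ x : {x : U // x ≠ w₁ ∧ x ≠ w₂}, g x = β x.val}


lemma flipS_notmem {V : Type*} [DecidableEq V] (α : V → Bool) (S : Finset V) {x : V}
    (h : x ∉ S) : flipS α S x = α x := if_neg h

lemma flipS_mem {V : Type*} [DecidableEq V] (α : V → Bool) (S : Finset V) {x : V}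
    (h : x ∈ S) : flipS α S x = !(α x) := if_pos h

lemma bne_of_ne {a b : Bool} (h : a ≠ b) : (!a) = b := by
  cases a <;> cases b <;> simp_all

lemma restrict_flip {U : Type*} [DecidableEq U] {w₁ w₂ : U}
    (α : U → Bool) (g : {x : U // x ≠ w₁ ∧ x ≠ w₂} → Bool)
    (hg : ∀ x : {x : U // x ≠ w₁ ∧ x ≠ w₂}, g x = α x.val)
    (u v : {x : U // x ≠ w₁ ∧ x ≠ w₂}) (x : {x : U // x ≠ w₁ ∧ x ≠ w₂}) :
    flipS g {u, v} x = flipS α {u.val, v.val} x.val := by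
  have hmem : x ∈ ({u, v} : Finset _) ↔ x.val ∈ ({u.val, v.val} : Finset U) := by
    simp [Subtype.ext_iff]
  by_cases h : x ∈ ({u, v} : Finset _)
  · rw [flipS_mem _ _ h, flipS_mem _ _ (hmem.mp h), hg]
  · rw [flipS_notmem _ _ h, flipS_notmem _ _ (fun hc => h (hmem.mpr hc)), hg]

lemma parity_restrict {U : Type} [Fintype U] [DecidableEq U] {w₁ w₂ : U} (hw : w₁ ≠ w₂)
    (β : U → Bool) (h12 : β w₁ = β w₂)
    (g : {x : U // x ≠ w₁ ∧ x ≠ w₂} → Bool) (hg : ∀ x, g x = β x.val) :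
    numOnes g % 2 = numOnes β % 2 := by
  classical
  have hcard : numOnes β =
      ((if β w₁ = true then 1 else 0) + (if β w₂ = true then 1 else 0)) + numOnes g := by
    unfold numOnes
    rw [Finset.card_filter, Finset.card_filter,
      ← Finset.sum_add_sum_compl ({w₁, w₂} : Finset U)]
    congr 1
    · rw [Finset.sum_pair hw]
    · rw [Finset.sum_subtype (p := fun x => x ≠ w₁ ∧ x ≠ w₂) _ (fun x => by simp [not_or]) (fun a => if β a = true then 1 else 0)]
      exact Finset.sum_congr rfl (fun x _ => by rw [hg])
  rw [hcard, h12]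
  cases h : β w₂ <;> simp <;> omega

lemma case_swap {U : Type*} [DecidableEq U] {M : Set (U → Bool)}
    (hex : ∀ α ∈ M, ∀ β ∈ M, ∀ v, α v ≠ β v → ∃ u, α u ≠ β u ∧ flipS α {u, v} ∈ M)
    {w w' : U} (hww : w ≠ w') {α β : U → Bool} (hα : α ∈ M) (hβ : β ∈ M)
    (hαw : α w = α w') (hβw : β w = β w') (hαβw : α w ≠ β w)
    {v : U} (hvw : v ≠ w) (hvw' : v ≠ w') (hv : α v ≠ β v)
    (hα' : flipS α {w, v} ∈ M) :
    ∃ u, u ≠ w ∧ u ≠ w' ∧ α u ≠ β u ∧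
      ∃ γ ∈ M, γ w = γ w' ∧ ∀ x, x ≠ w → x ≠ w' → γ x = flipS α {u, v} x := by
  set α' := flipS α {w, v} with hα'def
  have hα'w : α' w = !α w := flipS_mem _ _ (by simp)
  have hα'v : α' v = !α v := flipS_mem _ _ (by simp)
  have hα'x : ∀ x, x ≠ w → x ≠ v → α' x = α x := fun x h1 h2 =>
    flipS_notmem _ _ (by simp [h1, h2])
  have hα'w' : α' w' = α w' := hα'x w' (Ne.symm hww) (Ne.symm hvw')
  have h2 : α' w' ≠ β w' := by
    rw [hα'w', ← hαw, ← hβw]; exact hαβw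
  obtain ⟨u', hu', hγ⟩ := hex α' hα' β hβ w' h2
  have hu'w : u' ≠ w := by
    intro h; apply hu'; rw [h, hα'w]; exact bne_of_ne hαβw
  have hu'v : u' ≠ v := by
    intro h; apply hu'; rw [h, hα'v]; exact bne_of_ne hv
  have hγw : flipS α' {u', w'} w = !α w := by
    rw [flipS_notmem _ _ (by simp [Ne.symm hu'w, hww]), hα'w]
  have hγw' : flipS α' {u', w'} w' = !α w' := by
    rw [flipS_mem _ _ (by simp), hα'w']
  by_cases hu'w' : u' = w'
  · refine ⟨v, hvw, hvw', hv, flipS α' {u', w'}, hγ, ?_, ?_⟩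
    · rw [hγw, hγw', hαw]
    · intro x hxw hxw'
      rw [flipS_notmem _ _ (by simp [hu'w', hxw'])]
      by_cases hxv : x = v
      · rw [hxv, hα'v, flipS_mem α {v, v} (by simp)]
      · rw [hα'x x hxw hxv, flipS_notmem α {v, v} (by simp [hxv])]
  · refine ⟨u', hu'w, hu'w', ?_, flipS α' {u', w'}, hγ, ?_, ?_⟩
    · rw [← hα'x u' hu'w hu'v]; exact hu'
    · rw [hγw, hγw', hαw]
    · intro x hxw hxw'
      by_cases hxu : x = u'
      · rw [flipS_mem _ _ (by simp [hxu]), flipS_mem α {u', v} (by simp [hxu]),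
          hα'x x hxw (hxu ▸ hu'v)]
      · rw [flipS_notmem _ _ (by simp [hxu, hxw'])]
        by_cases hxv : x = v
        · rw [hxv, hα'v, flipS_mem α {u', v} (by simp)]
        · rw [hα'x x hxw hxv, flipS_notmem α {u', v} (by simp [hxu, hxv])]

/-- Identifying two distinct variables of a Δ-matroid (such that some tuple of `M` agrees
on the two variables) yields a Δ-matroid; moreover, identifying two variables of an even
Δ-matroid yields an even Δ-matroid. -/
theorem identify_deltaMatroid {U : Type} [Fintype U] [DecidableEq U]
    (M : Set (U → Bool)) (w₁ w₂ : U) (hw : w₁ ≠ w₂) (hne : ∃ β ∈ M, β w₁ = β w₂) :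
    (IsDeltaMatroid M → IsDeltaMatroid (identify M w₁ w₂)) ∧
    (IsEvenDeltaMatroid M → IsEvenDeltaMatroid (identify M w₁ w₂)) := by
  have key : IsDeltaMatroid M → IsDeltaMatroid (identify M w₁ w₂) := by
    rintro ⟨-, hex⟩
    constructor
    · obtain ⟨β, hβ, hββ⟩ := hne
      exact ⟨fun x => β x.val, β, hβ, hββ, fun x => rfl⟩
    · rintro g ⟨α, hα, hα12, hgα⟩ h ⟨β, hβ, hβ12, hhβ⟩ v hv
      have hvαβ : α v.val ≠ β v.val := by rw [← hgα v, ← hhβ v]; exact hv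
      obtain ⟨u, huαβ, hM'⟩ := hex α hα β hβ v.val hvαβ
      by_cases hu1 : u = w₁
      · obtain ⟨u', h1, h2, h3, γ, hγM, hγ12, hγeq⟩ :=
          case_swap hex hw hα hβ hα12 hβ12 (hu1 ▸ huαβ) v.2.1 v.2.2 hvαβ (hu1 ▸ hM')
        refine ⟨⟨u', h1, h2⟩, ?_, γ, hγM, hγ12, ?_⟩
        · rw [hgα, hhβ]; exact h3
        · intro x
          rw [restrict_flip α g hgα _ v x, hγeq x.val x.2.1 x.2.2]
      · by_cases hu2 : u = w₂
        · obtain ⟨u', h1, h2, h3, γ, hγM, hγ12, hγeq⟩ :=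
            case_swap hex hw.symm hα hβ hα12.symm hβ12.symm
              (hu2 ▸ huαβ) v.2.2 v.2.1 hvαβ (hu2 ▸ hM')
          refine ⟨⟨u', h2, h1⟩, ?_, γ, hγM, hγ12.symm, ?_⟩
          · rw [hgα, hhβ]; exact h3
          · intro x
            rw [restrict_flip α g hgα _ v x, hγeq x.val x.2.2 x.2.1]
        · refine ⟨⟨u, hu1, hu2⟩, ?_, flipS α {u, v.val}, hM', ?_, ?_⟩
          · rw [hgα, hhβ]; exact huαβ
          · rw [flipS_notmem _ _ (by simp [Ne.symm hu1, Ne.symm v.2.1]),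
              flipS_notmem _ _ (by simp [Ne.symm hu2, Ne.symm v.2.2])]
            exact hα12
          · intro x
            exact restrict_flip α g hgα _ v x
  refine ⟨key, fun hM => ⟨key hM.1, ?_⟩⟩
  rintro g ⟨α, hα, hα12, hgα⟩ h ⟨β, hβ, hβ12, hhβ⟩
  rw [parity_restrict hw α hα12 g hgα, parity_restrict hw β hβ12 h hhβ]
  exact hM.2 α hα β hβ
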